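/- Let γ:[a,b]→ℝⁿ be a C² curve with |γ'(t)| ≥ δ₁ > 0 and |γ''(t)| ≤ C for all t, and suppose |γ(t)| < δ₁²/C for all t ∈ [a,b]. Then |γ(t)|² has no interior local maximum on (a,b); equivalently, if d/dt |γ(t)|² ≥ 0 at some point t₀, then t ↦ |γ(t)| is non-decreasing on [t₀,b]. -/

import Mathlib

/- STATEMENT 7: Let γ:[a,b]→ℝⁿ be C² with ‖γ'‖ ≥ δ₁ > 0, ‖γ''‖ ≤ C and ‖γ‖ < δ₁²/C on
[a,b].  Then ‖γ‖² has no interior local maximum on (a,b); equivalently, if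
(d/dt)‖γ‖² ≥ 0 at some t₀ then t ↦ ‖γ(t)‖ is non-decreasing on [t₀,b]. -/

theorem stmt_7 {n : ℕ} (γ v A : ℝ → EuclideanSpace ℝ (Fin n)) (a b δ₁ C : ℝ)
    (hδ : 0 < δ₁) (hC : 0 < C)
    (hderiv : ∀ t ∈ Set.Icc a b, HasDerivAt γ (v t) t ∧ HasDerivAt v (A t) t)
    (hv : ∀ t ∈ Set.Icc a b, δ₁ ≤ ‖v t‖)
    (hA : ∀ t ∈ Set.Icc a b, ‖A t‖ ≤ C)
    (hγ : ∀ t ∈ Set.Icc a b, ‖γ t‖ < δ₁^2 / C) :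
    (¬ ∃ t₃ ∈ Set.Ioo a b, IsLocalMax (fun t => ‖γ t‖^2) t₃) ∧
    ∀ t₀ ∈ Set.Icc a b, 0 ≤ deriv (fun t => ‖γ t‖^2) t₀ →
      MonotoneOn (fun t => ‖γ t‖) (Set.Icc t₀ b) := by
  set g : ℝ → ℝ := fun t => (inner ℝ (γ t) (v t) : ℝ) with hg_def
  -- derivative of f = ‖γ‖²
  have hfun : (fun t => ‖γ t‖^2) = fun t => (inner ℝ (γ t) (γ t) : ℝ) := by
    funext t; rw [real_inner_self_eq_norm_sq]
  have hfd : ∀ t ∈ Set.Icc a b, HasDerivAt (fun t => ‖γ t‖^2) (2 * g t) t := by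
    intro t ht
    rw [hfun]
    have h1 : HasDerivAt (fun t => (inner ℝ (γ t) (γ t) : ℝ)) _ t := ((hderiv t ht).1.inner ℝ (hderiv t ht).1)
    convert h1 using 1
    simp only [hg_def]
    rw [real_inner_comm (v t) (γ t)]
    ring
  -- derivative of g
  have hgd : ∀ t ∈ Set.Icc a b,
      HasDerivAt g ((inner ℝ (γ t) (A t) : ℝ) + (inner ℝ (v t) (v t) : ℝ)) t := by
    intro t ht
    exact (hderiv t ht).1.inner ℝ (hderiv t ht).2
  have hpos : ∀ t ∈ Set.Icc a b,
      0 < (inner ℝ (γ t) (A t) : ℝ) + (inner ℝ (v t) (v t) : ℝ) := by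
    intro t ht
    have h1 : |(inner ℝ (γ t) (A t) : ℝ)| ≤ ‖γ t‖ * ‖A t‖ := abs_real_inner_le_norm _ _
    have h2 : (inner ℝ (v t) (v t) : ℝ) = ‖v t‖^2 := real_inner_self_eq_norm_sq _
    have h3 := hv t ht
    have h4 := hA t ht
    have h5 := hγ t ht
    have h6 : ‖γ t‖ * C < δ₁^2 := by
      calc ‖γ t‖ * C < (δ₁^2 / C) * C := by
            exact mul_lt_mul_of_pos_right h5 hC
        _ = δ₁^2 := by field_simp
    have h7 : ‖γ t‖ * ‖A t‖ ≤ ‖γ t‖ * C := mul_le_mul_of_nonneg_left h4 (norm_nonneg _)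
    have h8 : -(‖γ t‖ * C) ≤ (inner ℝ (γ t) (A t) : ℝ) := by
      have := (abs_le.mp h1).1
      linarith
    have h9 : δ₁^2 ≤ ‖v t‖^2 := by nlinarith [norm_nonneg (v t)]
    rw [h2]; linarith
  -- key monotonicity fact
  have key : ∀ t₀ ∈ Set.Icc a b, 0 ≤ g t₀ →
      MonotoneOn (fun t => ‖γ t‖^2) (Set.Icc t₀ b) := by
    intro t₀ ht₀ hgt₀
    have hsub : Set.Icc t₀ b ⊆ Set.Icc a b := Set.Icc_subset_Icc ht₀.1 le_rfl
    have hgmono : StrictMonoOn g (Set.Icc t₀ b) := by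
      refine strictMonoOn_of_deriv_pos (convex_Icc _ _)
        (fun t ht => (hgd t (hsub ht)).continuousAt.continuousWithinAt) ?_
      intro x hx
      have hx' : x ∈ Set.Icc t₀ b := interior_subset hx
      rw [(hgd x (hsub hx')).deriv]
      exact hpos x (hsub hx')
    have hgnn : ∀ t ∈ Set.Icc t₀ b, 0 ≤ g t := by
      intro t ht
      rcases eq_or_lt_of_le ht.1 with h | h
      · rw [← h]; exact hgt₀
      · exact le_of_lt (lt_of_le_of_lt hgt₀
          (hgmono ⟨le_rfl, le_trans ht.1 ht.2⟩ ht h))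
    refine monotoneOn_of_deriv_nonneg (convex_Icc _ _)
      (fun t ht => (hfd t (hsub ht)).continuousAt.continuousWithinAt)
      (fun x hx => (hfd x (hsub (interior_subset hx))).differentiableAt.differentiableWithinAt)
      ?_
    intro x hx
    have hx' : x ∈ Set.Icc t₀ b := interior_subset hx
    rw [(hfd x (hsub hx')).deriv]
    have := hgnn x hx'
    linarith
  constructor
  · rintro ⟨t₃, ht₃, hmax⟩
    have ht₃' : t₃ ∈ Set.Icc a b := ⟨le_of_lt ht₃.1, le_of_lt ht₃.2⟩
    have h0 : 2 * g t₃ = 0 := hmax.hasDerivAt_eq_zero (hfd t₃ ht₃')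
    have hg0 : g t₃ = 0 := by linarith
    have hsub : Set.Icc t₃ b ⊆ Set.Icc a b := Set.Icc_subset_Icc ht₃'.1 le_rfl
    have hgmono : StrictMonoOn g (Set.Icc t₃ b) := by
      refine strictMonoOn_of_deriv_pos (convex_Icc _ _)
        (fun t ht => (hgd t (hsub ht)).continuousAt.continuousWithinAt) ?_
      intro x hx
      have hx' : x ∈ Set.Icc t₃ b := interior_subset hx
      rw [(hgd x (hsub hx')).deriv]
      exact hpos x (hsub hx')
    have hfSM : StrictMonoOn (fun t => ‖γ t‖^2) (Set.Icc t₃ b) := by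
      refine strictMonoOn_of_deriv_pos (convex_Icc _ _)
        (fun t ht => (hfd t (hsub ht)).continuousAt.continuousWithinAt) ?_
      intro x hx
      rw [interior_Icc] at hx
      have hx' : x ∈ Set.Icc t₃ b := ⟨le_of_lt hx.1, le_of_lt hx.2⟩
      rw [(hfd x (hsub hx')).deriv]
      have : g t₃ < g x := hgmono ⟨le_rfl, le_of_lt ht₃.2⟩ hx' hx.1
      rw [hg0] at this
      linarith
    have hev : ∀ᶠ t in nhdsWithin t₃ (Set.Ioi t₃), ‖γ t‖^2 ≤ ‖γ t₃‖^2 :=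
      hmax.filter_mono nhdsWithin_le_nhds
    have hIoo : Set.Ioo t₃ b ∈ nhdsWithin t₃ (Set.Ioi t₃) :=
      Ioo_mem_nhdsGT_of_mem ⟨le_rfl, ht₃.2⟩
    obtain ⟨c, hc1, hc2⟩ := (hev.and (Filter.eventually_of_mem hIoo (fun x hx => hx))).exists
    have : ‖γ t₃‖^2 < ‖γ c‖^2 :=
      hfSM ⟨le_rfl, le_of_lt ht₃.2⟩ ⟨le_of_lt hc2.1, le_of_lt hc2.2⟩ hc2.1
    linarith
  · intro t₀ ht₀ hd
    rw [(hfd t₀ ht₀).deriv] at hd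
    have hg0 : 0 ≤ g t₀ := by linarith
    have hm := key t₀ ht₀ hg0
    intro x hx y hy hxy
    have := hm hx hy hxy
    simp only at this
    nlinarith [norm_nonneg (γ x), norm_nonneg (γ y)]
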